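/- arXiv:1512.06776 — 2 statements merged into one kernel-verified Lean document; each statement's English description precedes it below -/
import Mathlib

section
/- The associated Ehresmann category C of an E-Ehresmann semigroup S is a groupoid if and only if S is an inverse semigroup and E = E(S). -/
/-- An E-Ehresmann semigroup as a (2,1,1)-algebra. -/
class EhresmannSemigroup (S : Type*) extends Semigroup S where
  plus : S → S
  estar : S → S
  plus_mul_self : ∀ x : S, plus x * x = x
  plus_prod_idem : ∀ x y : S, plus (plus x * plus y) = plus x * plus y
  plus_comm : ∀ x y : S, plus x * plus y = plus y * plus x
  plus_absorb : ∀ x y : S, plus x * plus (x * y) = plus (x * y)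
  plus_mul_plus : ∀ x y : S, plus (x * y) = plus (x * plus y)
  mul_estar_self : ∀ x : S, x * estar x = x
  estar_prod_idem : ∀ x y : S, estar (estar x * estar y) = estar x * estar y
  estar_comm : ∀ x y : S, estar x * estar y = estar y * estar x
  estar_absorb : ∀ x y : S, estar (x * y) * estar y = estar (x * y)
  estar_mul_estar : ∀ x y : S, estar (x * y) = estar (estar x * y)
  estar_plus : ∀ x : S, estar (plus x) = plus x
  plus_estar : ∀ x : S, plus (estar x) = estar x

open EhresmannSemigroup

/-- The distinguished semilattice `E` of an `E`-Ehresmann semigroup. -/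
def eE (S : Type*) [EhresmannSemigroup S] : Set S := Set.range (plus : S → S)

/-- The partial order `≤_r` : `a ≤_r b` iff `a = a⁺ b`. -/
def leR {S : Type*} [EhresmannSemigroup S] (a b : S) : Prop := a = plus a * b

/-- The partial order `≤_l` : `a ≤_l b` iff `a = b a*`. -/
def leL {S : Type*} [EhresmannSemigroup S] (a b : S) : Prop := a = b * estar a

/-- Green's `R` relation on a semigroup. -/
def rRel {S : Type*} [Semigroup S] (a b : S) : Prop :=
  (a = b ∨ ∃ x, a * x = b) ∧ (b = a ∨ ∃ x, b * x = a)

/-- Green's `L` relation on a semigroup. -/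
def lRel {S : Type*} [Semigroup S] (a b : S) : Prop :=
  (a = b ∨ ∃ x, x * a = b) ∧ (b = a ∨ ∃ x, x * b = a)

/-- Green's `D` relation on a semigroup. -/
def dRel {S : Type*} [Semigroup S] (a b : S) : Prop := ∃ c, rRel a c ∧ lRel c b

/-- The set `Reg_E(S)` of elements corresponding to invertible morphisms. -/
def regE (S : Type*) [EhresmannSemigroup S] : Set S :=
  {a | rRel a (plus a) ∧ lRel a (estar a)}

/-- `C(a)` is an invertible morphism of the associated Ehresmann category. -/
def invertibleC {S : Type*} [EhresmannSemigroup S] (a : S) : Prop :=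
  ∃ b, plus b = estar a ∧ estar b = plus a ∧ a * b = plus a ∧ b * a = estar a

open EhresmannSemigroup

section MyHelpers
variable {S : Type*} [EhresmannSemigroup S]

lemma myPlusPlus (x : S) : plus (plus x) = plus x := by
  have h := plus_estar (S := S) (plus x)
  rwa [estar_plus] at h

lemma myEstarEstar (x : S) : estar (estar x) = estar x := by
  have h := estar_plus (S := S) (estar x)
  rwa [plus_estar] at h

lemma myInEPlus {e : S} (h : ∃ x, plus x = e) : plus e = e := by
  obtain ⟨x, rfl⟩ := h; exact myPlusPlus x

lemma myInEEstar {e : S} (h : ∃ x, plus x = e) : estar e = e := by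
  obtain ⟨x, rfl⟩ := h; exact estar_plus x

lemma myInEMul {e f : S} (he : ∃ x, plus x = e) (hf : ∃ x, plus x = f) :
    ∃ x, plus x = e * f := by
  obtain ⟨x, rfl⟩ := he; obtain ⟨y, rfl⟩ := hf
  exact ⟨plus x * plus y, by rw [plus_prod_idem]⟩

lemma myInEIdem {e : S} (h : ∃ x, plus x = e) : e * e = e := by
  have h2 := plus_mul_self e
  rwa [myInEPlus h] at h2

lemma myInEComm {e f : S} (he : ∃ x, plus x = e) (hf : ∃ x, plus x = f) :
    e * f = f * e := by
  obtain ⟨x, rfl⟩ := he; obtain ⟨y, rfl⟩ := hf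
  exact plus_comm x y

lemma myEstarInE (a : S) : ∃ x, plus x = estar a := ⟨estar a, plus_estar a⟩

lemma myPlusInE (a : S) : ∃ x, plus x = plus a := ⟨a, rfl⟩

/-- From `a R a⁺` and `a L a*` data we get a genuine categorical inverse. -/
lemma myExistsB {a : S} (hu : ∃ u, a * u = plus a) (hv : ∃ v, v * a = estar a) :
    ∃ b : S, plus b = estar a ∧ estar b = plus a ∧ a * b = plus a ∧ b * a = estar a := by
  obtain ⟨u, hu⟩ := hu
  obtain ⟨v, hv⟩ := hv
  have plusidem : plus a * plus a = plus a := myInEIdem (myPlusInE a)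
  have staridem : estar a * estar a = estar a := myInEIdem (myEstarInE a)
  set b := estar a * u with hbdef
  set b2 := v * plus a with hb2def
  have hab : a * b = plus a := by
    rw [hbdef, ← mul_assoc, mul_estar_self, hu]
  have hb2a : b2 * a = estar a := by
    rw [hb2def, mul_assoc, plus_mul_self, hv]
  have heq : b2 = b := by
    have h1 : b2 * plus a = b2 := by rw [hb2def, mul_assoc, plusidem]
    have h2 : b2 * (a * b) = (b2 * a) * b := (mul_assoc _ _ _).symm
    have h3 : estar a * b = b := by rw [hbdef, ← mul_assoc, staridem]
    calc b2 = b2 * plus a := h1.symm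
      _ = b2 * (a * b) := by rw [hab]
      _ = (b2 * a) * b := h2
      _ = estar a * b := by rw [hb2a]
      _ = b := h3
  have hba : b * a = estar a := by rw [← heq]; exact hb2a
  have hbp : b * plus a = b := by
    rw [← heq, hb2def, mul_assoc, plusidem]
  have hsb : estar a * b = b := by rw [hbdef, ← mul_assoc, staridem]
  have hplusb : plus b = estar a := by
    have h1 : plus (b * a) = plus b := by
      rw [plus_mul_plus, hbp]
    have h2 : plus (b * a) = estar a := by rw [hba, plus_estar]
    rw [← h1, h2]
  have hestarb : estar b = plus a := by
    have h1 : estar (a * b) = estar b := by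
      rw [estar_mul_estar, hsb]
    have h2 : estar (a * b) = plus a := by rw [hab, estar_plus]
    rw [← h1, h2]
  exact ⟨b, hplusb, hestarb, hab, hba⟩

lemma myGetU (H : ∀ a : S, rRel a (plus a) ∧ lRel a (estar a)) (a : S) :
    ∃ u, a * u = plus a := by
  rcases (H a).1.1 with h | h
  · refine ⟨a, ?_⟩
    have h2 := plus_mul_self a
    rw [← h] at h2 ⊢
    exact h2
  · exact h

lemma myGetV (H : ∀ a : S, rRel a (plus a) ∧ lRel a (estar a)) (a : S) :
    ∃ v, v * a = estar a := by
  rcases (H a).2.1 with h | h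
  · refine ⟨a, ?_⟩
    have h2 := mul_estar_self a
    rw [← h] at h2 ⊢
    exact h2
  · exact h

lemma myIdemMem (H : ∀ a : S, rRel a (plus a) ∧ lRel a (estar a)) {e : S}
    (he : e * e = e) : plus e = e := by
  obtain ⟨b, hpb, hsb, heb, hbe⟩ := myExistsB (myGetU H e) (myGetV H e)
  have h1 : e * plus e = plus e := by
    calc e * plus e = e * (e * b) := by rw [heb]
      _ = (e * e) * b := (mul_assoc _ _ _).symm
      _ = e * b := by rw [he]
      _ = plus e := heb
  have hbb : b * plus e = b := by
    have h := mul_estar_self b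
    rwa [hsb] at h
  have hbval : b = estar e * plus e := by
    calc b = b * plus e := hbb.symm
      _ = b * (e * plus e) := by rw [h1]
      _ = (b * e) * plus e := (mul_assoc _ _ _).symm
      _ = estar e * plus e := by rw [hbe]
  have hbE : ∃ x, plus x = b := by
    rw [hbval]; exact myInEMul (myEstarInE e) (myPlusInE e)
  have hb1 : b = estar e := by rw [← hpb, myInEPlus hbE]
  have hb2 : b = plus e := by rw [← hsb, myInEEstar hbE]
  have hpe : plus e = estar e := hb2.symm.trans hb1
  calc plus e = e * plus e := h1.symm
    _ = e * estar e := by rw [hpe]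
    _ = e := mul_estar_self e

lemma myForwardInv (H : ∀ a : S, rRel a (plus a) ∧ lRel a (estar a)) (a : S) :
    ∃! b : S, a * b * a = a ∧ b * a * b = b := by
  obtain ⟨b, hpb, hsb, hab, hba⟩ := myExistsB (myGetU H a) (myGetV H a)
  have hb1 : a * b * a = a := by rw [hab, plus_mul_self]
  have hb2 : b * a * b = b := by rw [hba, ← hpb, plus_mul_self]
  refine ⟨b, ⟨hb1, hb2⟩, ?_⟩
  rintro c ⟨hc1, hc2⟩
  have ix : (b * a) * (b * a) = b * a := by rw [← mul_assoc, hb2]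
  have iy : (c * a) * (c * a) = c * a := by rw [← mul_assoc, hc2]
  have iu : (a * b) * (a * b) = a * b := by rw [← mul_assoc, hb1]
  have iw : (a * c) * (a * c) = a * c := by rw [← mul_assoc, hc1]
  have memIdem : ∀ {e : S}, e * e = e → ∃ x, plus x = e :=
    fun h => ⟨_, myIdemMem H h⟩
  have comm_xy : (b * a) * (c * a) = (c * a) * (b * a) :=
    myInEComm (memIdem ix) (memIdem iy)
  have comm_uw : (a * b) * (a * c) = (a * c) * (a * b) :=
    myInEComm (memIdem iu) (memIdem iw)
  have hxy : (b * a) * (c * a) = b * a := by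
    calc (b * a) * (c * a) = b * (a * (c * a)) := mul_assoc b a (c * a)
      _ = b * ((a * c) * a) := by rw [← mul_assoc a c a]
      _ = b * a := by rw [hc1]
  have huw : (a * b) * (a * c) = a * c := by
    calc (a * b) * (a * c) = ((a * b) * a) * c := (mul_assoc (a * b) a c).symm
      _ = a * c := by rw [hb1]
  have h5 : b = (c * a) * b := by
    calc b = (b * a) * b := by rw [hb2]
      _ = ((c * a) * (b * a)) * b := by rw [← comm_xy, hxy]
      _ = (c * a) * ((b * a) * b) := mul_assoc _ _ _
      _ = (c * a) * b := by rw [hb2]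
  have hcw : c * (a * c) = c := by rw [← mul_assoc, hc2]
  have h6 : c = (c * a) * b := by
    calc c = c * (a * c) := hcw.symm
      _ = c * ((a * b) * (a * c)) := by rw [huw]
      _ = c * ((a * c) * (a * b)) := by rw [comm_uw]
      _ = (c * (a * c)) * (a * b) := (mul_assoc _ _ _).symm
      _ = c * (a * b) := by rw [hcw]
      _ = (c * a) * b := (mul_assoc _ _ _).symm
  exact h6.trans h5.symm

lemma myBackward (hinv : ∀ a : S, ∃! b : S, a * b * a = a ∧ b * a * b = b)
    (memE : ∀ {e : S}, e * e = e → ∃ x, plus x = e) (a : S) :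
    rRel a (plus a) ∧ lRel a (estar a) := by
  obtain ⟨b, ⟨hb1, hb2⟩, -⟩ := hinv a
  have iu : (a * b) * (a * b) = a * b := by rw [← mul_assoc, hb1]
  have ix : (b * a) * (b * a) = b * a := by rw [← mul_assoc, hb2]
  have hx : a * (b * plus a) = plus a := by
    have h1 : plus ((a * b) * plus a) = (a * b) * plus a :=
      myInEPlus (myInEMul (memE iu) (myPlusInE a))
    calc a * (b * plus a) = (a * b) * plus a := (mul_assoc _ _ _).symm
      _ = plus ((a * b) * plus a) := h1.symm
      _ = plus ((a * b) * a) := (plus_mul_plus (a * b) a).symm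
      _ = plus a := by rw [hb1]
  have hy : (estar a * b) * a = estar a := by
    have h1 : estar (estar a * (b * a)) = estar a * (b * a) :=
      myInEEstar (myInEMul (myEstarInE a) (memE ix))
    calc (estar a * b) * a = estar a * (b * a) := mul_assoc _ _ _
      _ = estar (estar a * (b * a)) := h1.symm
      _ = estar (a * (b * a)) := (estar_mul_estar a (b * a)).symm
      _ = estar a := by rw [← mul_assoc, hb1]
  exact ⟨⟨Or.inr ⟨b * plus a, hx⟩, Or.inr ⟨a, plus_mul_self a⟩⟩,
        ⟨Or.inr ⟨estar a * b, hy⟩, Or.inr ⟨a, mul_estar_self a⟩⟩⟩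

end MyHelpers

/-- The associated Ehresmann category `C` of an E-Ehresmann
semigroup `S` is a groupoid (every morphism `C(a)` is invertible, equivalently
`a R a⁺` and `a L a*` for all `a`) iff `S` is an inverse semigroup (every
element has a unique inverse) and `E = E(S)`. -/
theorem groupoid_iff_inverse_semigroup (S : Type*) [EhresmannSemigroup S] :
    (∀ a : S, rRel a (plus a) ∧ lRel a (estar a)) ↔
      ((∀ a : S, ∃! b : S, a * b * a = a ∧ b * a * b = b) ∧
        eE S = {e : S | e * e = e}) := by
  constructor
  · intro H
    refine ⟨myForwardInv H, ?_⟩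
    ext e
    simp only [eE, Set.mem_range, Set.mem_setOf_eq]
    constructor
    · rintro ⟨x, rfl⟩
      exact myInEIdem ⟨x, rfl⟩
    · intro he
      exact ⟨e, myIdemMem H he⟩
  · rintro ⟨hinv, hE⟩
    have memE : ∀ {e : S}, e * e = e → ∃ x, plus x = e := by
      intro e he
      have h : e ∈ eE S := by rw [hE]; exact he
      exact h
    exact fun a => myBackward hinv memE a
end

section
/- In an E-Ehresmann semigroup S, the subset Reg_E(S) = {a ∈ S : a R a⁺ and a L a*} is a down ideal with respect to both partial orders ≤_r and ≤_l: if a ∈ Reg_E(S) and b ≤_r a or b ≤_l a, then b ∈ Reg_E(S). -/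
open EhresmannSemigroup

open EhresmannSemigroup

section Aux

variable {S : Type*} [EhresmannSemigroup S]

lemma myPlusIdem (x : S) : plus x * plus x = plus x := by
  have h := plus_mul_self (plus x)
  rwa [myPlusPlus] at h

lemma myEstarIdem (x : S) : estar x * estar x = estar x := by
  have h := mul_estar_self (estar x)
  rwa [myEstarEstar] at h

/-- From `a ∈ Reg_E(S)` extract a genuine inverse-like element. -/
lemma myExistsInv {a : S} (ha : a ∈ regE S) :
    ∃ a' : S, a * a' = plus a ∧ a' * a = estar a := by
  have ha' : rRel a (plus a) ∧ lRel a (estar a) := ha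
  have h1 : a = plus a ∨ ∃ x, a * x = plus a := ha'.1.1
  have h2 : a = estar a ∨ ∃ y, y * a = estar a := ha'.2.1
  have hx : ∃ x, a * x = plus a := by
    rcases h1 with h | h
    · refine ⟨a, ?_⟩
      nth_rewrite 1 [h]
      rw [plus_mul_self]
      exact h
    · exact h
  have hy : ∃ y, y * a = estar a := by
    rcases h2 with h | h
    · refine ⟨a, ?_⟩
      nth_rewrite 2 [h]
      rw [mul_estar_self]
      exact h
    · exact h
  obtain ⟨x, hx⟩ := hx
  obtain ⟨y, hy⟩ := hy
  refine ⟨estar a * x * plus a, ?_, ?_⟩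
  · calc a * (estar a * x * plus a)
        = (a * estar a) * x * plus a := by rw [← mul_assoc, ← mul_assoc]
      _ = a * x * plus a := by rw [mul_estar_self]
      _ = plus a * plus a := by rw [hx]
      _ = plus a := myPlusIdem a
  · calc (estar a * x * plus a) * a
        = estar a * x * (plus a * a) := by rw [mul_assoc]
      _ = estar a * x * a := by rw [plus_mul_self]
      _ = y * a * x * a := by rw [← hy]
      _ = y * (a * x) * a := by rw [mul_assoc y a x]
      _ = y * plus a * a := by rw [hx]
      _ = y * (plus a * a) := by rw [mul_assoc]
      _ = y * a := by rw [plus_mul_self]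
      _ = estar a := hy

/-- If `a` has an inverse-like element and `e ∈ E`, then `e * a ∈ Reg_E(S)`. -/
lemma myMulMemLeft (a a' e : S) (he : plus e = e)
    (h1 : a * a' = plus a) (h2 : a' * a = estar a) : e * a ∈ regE S := by
  have hse : estar e = e := by rw [← he, estar_plus]
  have hee : e * e = e := by rw [← he]; exact myPlusIdem e
  have comm : plus a * e = e * plus a := by rw [← he]; exact plus_comm a e
  have hpb : plus (e * a) = e * plus a := by
    rw [plus_mul_plus]
    rw [← he]
    exact plus_prod_idem e a
  have hr1 : (e * a) * (a' * e) = plus (e * a) := by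
    calc (e * a) * (a' * e)
        = e * (a * a') * e := by rw [← mul_assoc, mul_assoc e a a']
      _ = e * plus a * e := by rw [h1]
      _ = e * (plus a * e) := by rw [mul_assoc]
      _ = e * (e * plus a) := by rw [comm]
      _ = (e * e) * plus a := by rw [← mul_assoc]
      _ = e * plus a := by rw [hee]
      _ = plus (e * a) := hpb.symm
  have hr2 : plus (e * a) * a = e * a := by
    rw [hpb, mul_assoc, plus_mul_self]
  have hfa : estar (e * a) * estar a = estar (e * a) := estar_absorb e a
  have hw : estar (estar (e * a) * a') = e * plus a := by
    rw [← estar_mul_estar]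
    rw [mul_assoc, h1]
    rw [← hse, ← estar_plus a]
    exact estar_prod_idem e (plus a)
  have hkey : estar (e * a) * a' * (e * plus a) = estar (e * a) * a' := by
    rw [← hw]; exact mul_estar_self _
  have hl1 : (estar (e * a) * (a' * e)) * (e * a) = estar (e * a) := by
    calc (estar (e * a) * (a' * e)) * (e * a)
        = estar (e * a) * a' * e * e * a := by simp only [mul_assoc]
      _ = estar (e * a) * a' * (e * e) * a := by
          rw [mul_assoc (estar (e * a) * a') e e]
      _ = estar (e * a) * a' * e * a := by rw [hee]
      _ = estar (e * a) * a' * e * (plus a * a) := by rw [plus_mul_self a]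
      _ = estar (e * a) * a' * (e * plus a) * a := by simp only [mul_assoc]
      _ = estar (e * a) * a' * a := by rw [hkey]
      _ = estar (e * a) * (a' * a) := by rw [mul_assoc]
      _ = estar (e * a) * estar a := by rw [h2]
      _ = estar (e * a) := hfa
  have hl2 : (e * a) * estar (e * a) = e * a := mul_estar_self _
  exact ⟨⟨Or.inr ⟨a' * e, hr1⟩, Or.inr ⟨a, hr2⟩⟩,
         ⟨Or.inr ⟨estar (e * a) * (a' * e), hl1⟩, Or.inr ⟨e * a, hl2⟩⟩⟩

/-- If `a` has an inverse-like element and `e ∈ E`, then `a * e ∈ Reg_E(S)`. -/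
lemma myMulMemRight (a a' e : S) (he : estar e = e)
    (h1 : a * a' = plus a) (h2 : a' * a = estar a) : a * e ∈ regE S := by
  have hpe : plus e = e := by rw [← he, plus_estar]
  have hee : e * e = e := by rw [← he]; exact myEstarIdem e
  have comm : estar a * e = e * estar a := by rw [← he]; exact estar_comm a e
  have hsb : estar (a * e) = estar a * e := by
    rw [estar_mul_estar]
    rw [← he]
    exact estar_prod_idem a e
  have hl1 : (e * a') * (a * e) = estar (a * e) := by
    calc (e * a') * (a * e)
        = e * (a' * a) * e := by rw [← mul_assoc, mul_assoc e a' a]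
      _ = e * estar a * e := by rw [h2]
      _ = e * (estar a * e) := by rw [mul_assoc]
      _ = e * (e * estar a) := by rw [comm]
      _ = (e * e) * estar a := by rw [← mul_assoc]
      _ = e * estar a := by rw [hee]
      _ = estar a * e := comm.symm
      _ = estar (a * e) := hsb.symm
  have hl2 : (a * e) * estar (a * e) = a * e := mul_estar_self _
  have hqa : plus a * plus (a * e) = plus (a * e) := plus_absorb a e
  have hw : plus (a' * plus (a * e)) = estar a * e := by
    rw [← plus_mul_plus]
    rw [← mul_assoc, h2]
    rw [← hpe, ← plus_estar a]
    exact plus_prod_idem (estar a) e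
  have hkey : (estar a * e) * (a' * plus (a * e)) = a' * plus (a * e) := by
    rw [← hw]; exact plus_mul_self _
  have hr1 : (a * e) * (e * (a' * plus (a * e))) = plus (a * e) := by
    calc (a * e) * (e * (a' * plus (a * e)))
        = a * e * e * (a' * plus (a * e)) := by simp only [mul_assoc]
      _ = a * (e * e) * (a' * plus (a * e)) := by rw [mul_assoc a e e]
      _ = a * e * (a' * plus (a * e)) := by rw [hee]
      _ = (a * estar a) * e * (a' * plus (a * e)) := by rw [mul_estar_self]
      _ = a * ((estar a * e) * (a' * plus (a * e))) := by simp only [mul_assoc]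
      _ = a * (a' * plus (a * e)) := by rw [hkey]
      _ = (a * a') * plus (a * e) := by rw [← mul_assoc]
      _ = plus a * plus (a * e) := by rw [h1]
      _ = plus (a * e) := hqa
  have hr2 : plus (a * e) * (a * e) = a * e := plus_mul_self _
  exact ⟨⟨Or.inr ⟨e * (a' * plus (a * e)), hr1⟩, Or.inr ⟨a * e, hr2⟩⟩,
         ⟨Or.inr ⟨e * a', hl1⟩, Or.inr ⟨a * e, hl2⟩⟩⟩

end Aux

/-- In an E-Ehresmann semigroup `S`, the subset `Reg_E(S)` is a
down ideal with respect to both `≤_r` and `≤_l`: if `a ∈ Reg_E(S)` and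
`b ≤_r a` or `b ≤_l a`, then `b ∈ Reg_E(S)`. -/
theorem regE_down_ideal (S : Type*) [EhresmannSemigroup S]
    (a : S) (ha : a ∈ regE S) (b : S) :
    (leR b a → b ∈ regE S) ∧ (leL b a → b ∈ regE S) := by
  obtain ⟨a', h1, h2⟩ := myExistsInv ha
  constructor
  · intro hb
    have hb' : b = plus b * a := hb
    rw [hb']
    exact myMulMemLeft a a' (plus b) (myPlusPlus b) h1 h2
  · intro hb
    have hb' : b = a * estar b := hb
    rw [hb']
    exact myMulMemRight a a' (estar b) (myEstarEstar b) h1 h2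
end
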